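/- Let (X, T, P, ≤, σ) be a strictly typed topological space and let c = (p_0 ≤ p_1 ≤ ... ≤ p_{k-1}) be a chain of types in the lattice L. For each x ∈ X, let T_c(x) = {U ∈ T : x ∈ U and p_i ≤ σ(U) ≤ p_{i+1} for some i < k-1} and J_c(x) = {U ∈ T_c(x) : U is p_i-join-irreducible for some i < k-1}. Then J_c(x) is a neighborhood base for T_c(x): for every U ∈ T_c(x) there exists V ∈ J_c(x) with x ∈ V ⊆ U. -/

import Mathlib

open Set

/-- `p`-join-irreducible open set in a typed topological space with type map `σ`. -/
def PJI {X : Type*} [TopologicalSpace X] {L : Type*} [Lattice L]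
    (σ : Set X → L) (p : L) (U : Set X) : Prop :=
  U.Nonempty ∧ IsOpen U ∧ p ≤ σ U ∧
    ∀ W V : Set X, IsOpen W → IsOpen V → p ≤ σ W → p ≤ σ V → U = W ∪ V → U = W ∨ U = V

/-- The `c`-neighborhood system of `x`, for the chain `c 0 ≤ c 1 ≤ ... ≤ c (k-1)`. -/
def Tc {X : Type*} [TopologicalSpace X] {L : Type*} [Lattice L]
    (σ : Set X → L) (c : ℕ → L) (k : ℕ) (x : X) : Set (Set X) :=
  {U | IsOpen U ∧ x ∈ U ∧ ∃ i, i + 1 < k ∧ c i ≤ σ U ∧ σ U ≤ c (i + 1)}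

/-- The join-irreducible members of the `c`-neighborhood system of `x`. -/
def Jc {X : Type*} [TopologicalSpace X] {L : Type*} [Lattice L]
    (σ : Set X → L) (c : ℕ → L) (k : ℕ) (x : X) : Set (Set X) :=
  {U | U ∈ Tc σ c k x ∧ ∃ i, i + 1 < k ∧ c i ≤ σ U ∧ σ U ≤ c (i + 1) ∧ PJI σ (c i) U}

/-- The `c`-closure of a set `A`. -/
def cCl {X : Type*} [TopologicalSpace X] {L : Type*} [Lattice L]
    (σ : Set X → L) (c : ℕ → L) (k : ℕ) (A : Set X) : Set X :=
  {x | ∀ U ∈ Jc σ c k x, (U ∩ A).Nonempty}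

/-- The set of points with empty join-irreducible `c`-neighborhood family. -/
def Ec {X : Type*} [TopologicalSpace X] {L : Type*} [Lattice L]
    (σ : Set X → L) (c : ℕ → L) (k : ℕ) : Set X :=
  {x | Jc σ c k x = ∅}

/-- `D` is `c`-dense in `Y`. -/
def cDense {X : Type*} [TopologicalSpace X] {L : Type*} [Lattice L]
    (σ : Set X → L) (c : ℕ → L) (k : ℕ) (D Y : Set X) : Prop :=
  ∀ x ∈ Y, (x ∈ Ec σ c k → x ∈ D) ∧ ∀ U ∈ Jc σ c k x, (U ∩ D).Nonempty

/-- `T_c(X)`: union of the `c`-neighborhood systems over all points. -/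
def TcX {X : Type*} [TopologicalSpace X] {L : Type*} [Lattice L]
    (σ : Set X → L) (c : ℕ → L) (k : ℕ) : Set (Set X) :=
  {U | ∃ x : X, U ∈ Tc σ c k x}

theorem stmt6 {X : Type*} [TopologicalSpace X] [Finite X]
    {L : Type*} [Lattice L] [BoundedOrder L] (σ : Set X → L)
    (hbot : ∀ U : Set X, IsOpen U → (σ U = ⊥ ↔ U = ∅))
    (htop : ∀ U : Set X, IsOpen U → σ U ≠ ⊤)
    (hmono : ∀ U V : Set X, IsOpen U → IsOpen V → U ⊆ V → σ U ≤ σ V)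
    (hstrict : ∀ U V : Set X, IsOpen U → IsOpen V → U.Nonempty → U ⊂ V → σ U < σ V)
    (c : ℕ → L) (k : ℕ) (hc : ∀ i j, i ≤ j → j < k → c i ≤ c j)
    (x : X) (U : Set X) (hU : U ∈ Tc σ c k x) :
    ∃ V ∈ Jc σ c k x, x ∈ V ∧ V ⊆ U := by

  obtain ⟨hUo, hxU, i, hik, hci, hci1⟩ := hU
  set S : Set (Set X) := {V | IsOpen V ∧ x ∈ V ∧ V ⊆ U ∧ c i ≤ σ V} with hS
  have hSne : S.Nonempty := ⟨U, hUo, hxU, subset_rfl, hci⟩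
  obtain ⟨V, hVS, hmin⟩ : ∃ V ∈ S, ∀ W ∈ S, id W ≤ id V → id V = id W := by
    obtain ⟨V, hV⟩ := (Set.toFinite S).exists_minimal hSne
    exact ⟨V, hV.prop, fun W hW hWV => le_antisymm (hV.2 hW hWV) hWV⟩
  obtain ⟨hVo, hxV, hVU, hciV⟩ := hVS
  have hσV1 : σ V ≤ c (i + 1) := le_trans (hmono V U hVo hUo hVU) hci1
  have hPJI : PJI σ (c i) V := by
    refine ⟨⟨x, hxV⟩, hVo, hciV, ?_⟩
    intro W W' hWo hW'o hcW hcW' hVeq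
    have hxWW' : x ∈ W ∪ W' := hVeq ▸ hxV
    rcases hxWW' with hxW | hxW'
    · left
      have hWS : W ∈ S := ⟨hWo, hxW, (hVeq ▸ subset_union_left).trans hVU, hcW⟩
      simpa using (hmin W hWS (hVeq ▸ subset_union_left))
    · right
      have hWS : W' ∈ S := ⟨hW'o, hxW', (hVeq ▸ subset_union_right).trans hVU, hcW'⟩
      simpa using (hmin W' hWS (hVeq ▸ subset_union_right))
  exact ⟨V, ⟨⟨hVo, hxV, i, hik, hciV, hσV1⟩, i, hik, hciV, hσV1, hPJI⟩, hxV, hVU⟩
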